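/- Let A ⊆ [d], B ⊆ [d] with A ∩ B = ∅, let M ∈ ℝ^{2×d} have rows equal to the indicator vectors of A and B, and fix 0 < λ < 2√2/3. Then min_z ‖Mz − (1,1)ᵀ‖ + λ‖z‖₁ = min(√2, 2λ) ≥ 3λ/2, while if A ∩ B ≠ ∅ the minimum is at most λ. -/

import Mathlib

open Matrix

lemma sqrtlasso_key (a b l : ℝ) (hl : 0 < l) :
    min (Real.sqrt 2) (2*l) ≤ Real.sqrt ((a-1)^2+(b-1)^2) + l*(|a|+|b|) := by
  set r := Real.sqrt 2 with hrdef
  have hr : (0:ℝ) < r := Real.sqrt_pos.mpr (by norm_num)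
  have hr2 : r^2 = 2 := Real.sq_sqrt (by norm_num)
  set q := Real.sqrt ((a-1)^2+(b-1)^2) with hqdef
  have hq : 0 ≤ q := Real.sqrt_nonneg _
  have h1 : |a-1| + |b-1| ≤ r * q := by
    have h1a : (|a-1|+|b-1|)^2 ≤ 2*((a-1)^2+(b-1)^2) := by
      nlinarith [sq_nonneg (|a-1|-|b-1|), sq_abs (a-1), sq_abs (b-1)]
    have := Real.sqrt_le_sqrt h1a
    rwa [Real.sqrt_sq (by positivity), Real.sqrt_mul (by norm_num) _] at this
  have ha : 1 - |a| ≤ |a-1| := by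
    have := abs_sub_abs_le_abs_sub 1 a
    rw [abs_one, abs_sub_comm] at this; linarith
  have hb : 1 - |b| ≤ |b-1| := by
    have := abs_sub_abs_le_abs_sub 1 b
    rw [abs_one, abs_sub_comm] at this; linarith
  have hs : 0 ≤ |a| + |b| := by positivity
  have h2 : 2 - (|a| + |b|) ≤ r * q := by linarith
  rcases le_total r (2*l) with hc | hc
  · rw [min_eq_left hc]
    nlinarith [mul_nonneg hs (sub_nonneg.2 hc), mul_nonneg (mul_nonneg hs (sub_nonneg.2 hc)) hr.le, mul_nonneg hq hr.le]
  · rw [min_eq_right hc]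
    rcases le_total (|a|+|b|) 2 with hs2 | hs2
    · have h3 : r * l ≤ 1 := by nlinarith
      nlinarith [mul_nonneg (sub_nonneg.2 hs2) (sub_nonneg.2 h3), mul_nonneg hq hr.le]
    · nlinarith [mul_le_mul_of_nonneg_left hs2 hl.le]

/-- Square-root Lasso value gap for the Disjointness reduction:
with `M` the `2×d` matrix whose rows are the indicator vectors of nonempty sets
`A` and `B` and `0 < l < 2√2/3`, if `A ∩ B = ∅` the optimum equals
`min(√2, 2l) ≥ 3l/2`, while if `A ∩ B ≠ ∅` the optimum is at most `l`. -/
theorem sqrt_lasso_disjointness_gap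
    (d : ℕ) (A B : Finset (Fin d)) (hA : A.Nonempty) (hB : B.Nonempty)
    (x₁ x₂ : Fin d → ℝ)
    (hx₁ : ∀ i, x₁ i = if i ∈ A then 1 else 0)
    (hx₂ : ∀ i, x₂ i = if i ∈ B then 1 else 0)
    (M : Matrix (Fin 2) (Fin d) ℝ) (hM : M = Matrix.of ![x₁, x₂])
    (l : ℝ) (hl0 : 0 < l) (hl1 : l < 2 * Real.sqrt 2 / 3)
    (f : (Fin d → ℝ) → ℝ)
    (hf : ∀ z, f z = Real.sqrt (∑ i, (M.mulVec z i - 1) ^ 2) + l * ∑ j, |z j|) :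
    (A ∩ B = ∅ →
      IsLeast (Set.range f) (min (Real.sqrt 2) (2 * l))
      ∧ 3 * l / 2 ≤ min (Real.sqrt 2) (2 * l))
    ∧ ((A ∩ B).Nonempty → ∃ z, f z ≤ l) := by
  have hrow0 : ∀ z : Fin d → ℝ, M.mulVec z 0 = ∑ j ∈ A, z j := by
    intro z
    rw [hM]
    simp only [Matrix.mulVec, dotProduct, Matrix.of_apply, Matrix.cons_val_zero]
    rw [Finset.sum_congr rfl (fun j _ => by rw [hx₁ j, ite_mul, one_mul, zero_mul])]
    simp [Finset.sum_ite_mem]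
  have hrow1 : ∀ z : Fin d → ℝ, M.mulVec z 1 = ∑ j ∈ B, z j := by
    intro z
    rw [hM]
    simp only [Matrix.mulVec, dotProduct, Matrix.of_apply, Matrix.cons_val_one, Matrix.head_cons, Matrix.cons_val_zero]
    rw [Finset.sum_congr rfl (fun j _ => by rw [hx₂ j, ite_mul, one_mul, zero_mul])]
    simp [Finset.sum_ite_mem]
  have hfval : ∀ z : Fin d → ℝ, f z =
      Real.sqrt (((∑ j ∈ A, z j) - 1)^2 + ((∑ j ∈ B, z j) - 1)^2) + l * ∑ j, |z j| := by
    intro z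
    rw [hf z, Fin.sum_univ_two, hrow0 z, hrow1 z]
  constructor
  · intro hAB
    have hdisj : Disjoint A B := Finset.disjoint_iff_inter_eq_empty.mpr hAB
    constructor
    · constructor
      · -- membership: the minimum is attained
        rcases le_total (Real.sqrt 2) (2*l) with hc | hc
        · rw [min_eq_left hc]
          refine ⟨0, ?_⟩
          rw [hfval 0]
          simp only [Pi.zero_apply, Finset.sum_const_zero, abs_zero, mul_zero, add_zero]
          norm_num
        · rw [min_eq_right hc]
          obtain ⟨i₀, hi₀⟩ := hA
          obtain ⟨j₀, hj₀⟩ := hB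
          have hi₀B : i₀ ∉ B := fun h => (Finset.disjoint_left.mp hdisj hi₀) h
          have hj₀A : j₀ ∉ A := fun h => (Finset.disjoint_left.mp hdisj h) hj₀
          set z : Fin d → ℝ := fun j => (if j = i₀ then (1:ℝ) else 0) + (if j = j₀ then 1 else 0) with hz
          refine ⟨z, ?_⟩
          have hsumA : ∑ j ∈ A, z j = 1 := by
            simp only [hz, Finset.sum_add_distrib, Finset.sum_ite_eq', hi₀, hj₀A,
              if_pos, if_neg, if_true, if_false]
            norm_num
          have hsumB : ∑ j ∈ B, z j = 1 := by
            simp only [hz, Finset.sum_add_distrib, Finset.sum_ite_eq', hj₀, hi₀B,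
              if_pos, if_neg, if_true, if_false]
            norm_num
          have habs : ∑ j, |z j| = 2 := by
            have : ∀ j, |z j| = z j := by
              intro j
              apply abs_of_nonneg
              simp only [hz]
              positivity
            rw [Finset.sum_congr rfl (fun j _ => this j)]
            simp only [hz, Finset.sum_add_distrib, Finset.sum_ite_eq']
            simp
            norm_num
          rw [hfval z, hsumA, hsumB, habs]
          norm_num
          ring
      · -- lower bound
        rintro y ⟨z, rfl⟩
        rw [hfval z]
        have hl1b : |∑ j ∈ A, z j| + |∑ j ∈ B, z j| ≤ ∑ j, |z j| := by
          calc |∑ j ∈ A, z j| + |∑ j ∈ B, z j|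
              ≤ (∑ j ∈ A, |z j|) + ∑ j ∈ B, |z j| :=
                add_le_add (Finset.abs_sum_le_sum_abs _ _) (Finset.abs_sum_le_sum_abs _ _)
            _ = ∑ j ∈ A ∪ B, |z j| := (Finset.sum_union hdisj).symm
            _ ≤ ∑ j, |z j| := Finset.sum_le_sum_of_subset_of_nonneg (Finset.subset_univ _)
                (fun _ _ _ => abs_nonneg _)
        have key := sqrtlasso_key (∑ j ∈ A, z j) (∑ j ∈ B, z j) l hl0
        have : l * (|∑ j ∈ A, z j| + |∑ j ∈ B, z j|) ≤ l * ∑ j, |z j| :=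
          mul_le_mul_of_nonneg_left hl1b hl0.le
        linarith
    · -- 3l/2 ≤ min(√2, 2l)
      apply le_min
      · nlinarith
      · nlinarith
  · -- intersecting case
    rintro ⟨i, hi⟩
    rw [Finset.mem_inter] at hi
    set z : Fin d → ℝ := fun j => if j = i then 1 else 0 with hz
    refine ⟨z, ?_⟩
    have hsumA : ∑ j ∈ A, z j = 1 := by
      simp only [hz, Finset.sum_ite_eq', hi.1, if_true]
    have hsumB : ∑ j ∈ B, z j = 1 := by
      simp only [hz, Finset.sum_ite_eq', hi.2, if_true]
    have habs : ∑ j, |z j| = 1 := by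
      have : ∀ j, |z j| = z j := fun j => abs_of_nonneg (by simp only [hz]; positivity)
      rw [Finset.sum_congr rfl (fun j _ => this j)]
      simp [hz]
    rw [hfval z, hsumA, hsumB, habs]
    norm_num
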